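/- Let S be an additive abelian group and χ : S → ℂˣ a group homomorphism. On the complex vector space with basis {c} ∪ {A_{α,m} : α ∈ S, m ∈ ℤ}, the bilinear operation determined by [c, x] = [x, c] = 0 for all x and [A_{α,m}, A_{β,n}] = (χ(mβ − nα) − χ(nα − mβ))·A_{α+β,m+n} + m·δ_{α+β,0}·δ_{m+n,0}·c (for α,β ∈ S, m,n ∈ ℤ) is a Lie bracket: it is alternating and satisfies the Jacobi identity. -/

import Mathlib

open scoped Classical

/-- The underlying vector space `ℂ ⊕ ((S × ℤ) →₀ ℂ)` of the trigonometric Lie algebra `Â_S`. -/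
abbrev TrigA (S : Type*) := ℂ × ((S × ℤ) →₀ ℂ)

/-- The central basis element `c`. -/
noncomputable def Acen (S : Type*) : TrigA S := (1, 0)

/-- The basis element `A_{α,m}`. -/
noncomputable def Agen {S : Type*} (α : S) (m : ℤ) : TrigA S := (0, Finsupp.single (α, m) 1)

/-- The value of the bracket on the basis elements `A_{α,m}`, `A_{β,n}`:
`[A_{α,m}, A_{β,n}] = (χ(mβ − nα) − χ(nα − mβ))·A_{α+β,m+n} + m·δ_{α+β,0}·δ_{m+n,0}·c`. -/
noncomputable def AbrkBasis {S : Type*} [AddCommGroup S] (χ : S → ℂˣ) (p q : S × ℤ) :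
    TrigA S :=
  ((if p.1 + q.1 = 0 ∧ p.2 + q.2 = 0 then (p.2 : ℂ) else 0),
    Finsupp.single (p.1 + q.1, p.2 + q.2)
      (((χ (p.2 • q.1 - q.2 • p.1) : ℂˣ) : ℂ) - ((χ (q.2 • p.1 - p.2 • q.1) : ℂˣ) : ℂ)))

/-- The bilinear operation on `Â_S` determined by `[c, ·] = [·, c] = 0` and the values
`AbrkBasis` on basis elements. -/
noncomputable def Abrk {S : Type*} [AddCommGroup S] (χ : S → ℂˣ) (x y : TrigA S) : TrigA S :=
  x.2.sum fun p a => y.2.sum fun q b => (a * b) • AbrkBasis χ p q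

noncomputable def Bmap {S : Type*} [AddCommGroup S] (χ : S → ℂˣ) :
    ((S × ℤ) →₀ ℂ) →ₗ[ℂ] ((S × ℤ) →₀ ℂ) →ₗ[ℂ] TrigA S :=
  Finsupp.lsum ℂ fun p => LinearMap.toSpanSingleton ℂ _
    (Finsupp.lsum ℂ fun q => LinearMap.toSpanSingleton ℂ (TrigA S) (AbrkBasis χ p q))

theorem Abrk_eq {S : Type*} [AddCommGroup S] (χ : S → ℂˣ) (x y : TrigA S) :
    Abrk χ x y = Bmap χ x.2 y.2 := by
  simp only [Abrk, Bmap, Finsupp.lsum_apply, Finsupp.sum, LinearMap.coe_sum,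
    Finset.sum_apply, LinearMap.toSpanSingleton_apply]
  refine Finset.sum_congr rfl fun p _ => ?_
  rw [LinearMap.smul_apply]
  simp only [Finsupp.lsum_apply, Finsupp.sum, LinearMap.toSpanSingleton_apply,
    Finset.smul_sum, smul_smul]

noncomputable def fval {S : Type*} [AddCommGroup S] (χ : S → ℂˣ) (p q : S × ℤ) : ℂ :=
  ((χ (p.2 • q.1 - q.2 • p.1) : ℂˣ) : ℂ) - ((χ (q.2 • p.1 - p.2 • q.1) : ℂˣ) : ℂ)

theorem Bmap_single {S : Type*} [AddCommGroup S] (χ : S → ℂˣ) (p q : S × ℤ) (a b : ℂ) :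
    Bmap χ (Finsupp.single p a) (Finsupp.single q b) = (a * b) • AbrkBasis χ p q := by
  simp [Bmap, Finsupp.lsum_single, LinearMap.toSpanSingleton_apply, smul_smul]

theorem AbrkBasis_anti {S : Type*} [AddCommGroup S] (χ : S → ℂˣ) (p q : S × ℤ) :
    AbrkBasis χ q p = - AbrkBasis χ p q := by
  unfold AbrkBasis
  refine Prod.ext ?_ ?_
  · simp only [Prod.fst_neg]
    rw [add_comm q.1, add_comm q.2]
    split_ifs with h
    · have : q.2 = -p.2 := by omega
      simp [this]
    · simp
  · simp only [Prod.snd_neg]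
    rw [add_comm q.1, add_comm q.2, ← Finsupp.single_neg]
    congr 1
    ring

theorem Bmap_anti {S : Type*} [AddCommGroup S] (χ : S → ℂˣ) (f g : (S × ℤ) →₀ ℂ) :
    Bmap χ f g = - Bmap χ g f := by
  induction f using Finsupp.induction_linear with
  | zero => simp
  | add a b ha hb => simp only [map_add, LinearMap.add_apply, ha, hb]; abel
  | single p a =>
    induction g using Finsupp.induction_linear with
    | zero => simp
    | add a' b' ha hb =>
      rw [map_add, ha, hb, map_add, LinearMap.add_apply]; abel
    | single q b =>
      rw [Bmap_single, Bmap_single, AbrkBasis_anti χ p q, smul_neg, neg_neg, mul_comm]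

theorem Bmap_snd_single {S : Type*} [AddCommGroup S] (χ : S → ℂˣ) (p q : S × ℤ) (a b : ℂ) :
    (Bmap χ (Finsupp.single p a) (Finsupp.single q b)).2 =
      Finsupp.single (p.1 + q.1, p.2 + q.2) (a * b * fval χ p q) := by
  rw [Bmap_single, Prod.smul_snd]
  show (a * b) • Finsupp.single (p.1 + q.1, p.2 + q.2) (fval χ p q) = _
  rw [Finsupp.smul_single, smul_eq_mul, mul_assoc]

section
variable {S : Type*} [AddCommGroup S] (χ : S → ℂˣ)

theorem chi_zero (hχ : ∀ a b : S, χ (a + b) = χ a * χ b) : χ 0 = 1 := by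
  have h := hχ 0 0
  rw [add_zero] at h
  exact (left_eq_mul.mp h)

theorem chi_neg (hχ : ∀ a b : S, χ (a + b) = χ a * χ b) (s : S) : χ (-s) = (χ s)⁻¹ := by
  refine eq_inv_of_mul_eq_one_left ?_
  rw [← hχ, neg_add_cancel, chi_zero χ hχ]

theorem jac_basis (hχ : ∀ a b : S, χ (a + b) = χ a * χ b) (p q r : S × ℤ) :
    fval χ p q • AbrkBasis χ (p.1 + q.1, p.2 + q.2) r
      + fval χ q r • AbrkBasis χ (q.1 + r.1, q.2 + r.2) p
      + fval χ r p • AbrkBasis χ (r.1 + p.1, r.2 + p.2) q = 0 := by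
  obtain ⟨α, m⟩ := p
  obtain ⟨β, n⟩ := q
  obtain ⟨γ, k⟩ := r
  simp only at *
  refine Prod.ext ?_ ?_
  · -- first component
    simp only [AbrkBasis, Prod.fst_add, Prod.smul_fst, Prod.fst_zero, smul_eq_mul]
    simp only [show β + γ + α = α + β + γ from by abel,
      show γ + α + β = α + β + γ from by abel,
      show n + k + m = m + n + k from by ring,
      show k + m + n = m + n + k from by ring]
    by_cases hc : α + β + γ = 0 ∧ m + n + k = 0
    · simp only [if_pos hc]
      obtain ⟨h1, h2⟩ := hc
      have hγ : γ = -(α + β) := by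
        have := neg_eq_of_add_eq_zero_left h1
        rw [← this, neg_neg]
      have hk : k = -(m + n) := by omega
      subst hγ hk
      unfold fval
      simp only
      rw [show n • -(α + β) - -(m + n) • β = m • β - n • α from by module,
        show -(m + n) • β - n • -(α + β) = n • α - m • β from by module,
        show -(m + n) • α - m • -(α + β) = m • β - n • α from by module,
        show m • -(α + β) - -(m + n) • α = n • α - m • β from by module]
      push_cast
      ring
    · simp only [if_neg hc, mul_zero, add_zero, zero_add]
  · -- second component
    simp only [AbrkBasis, Prod.snd_add, Prod.smul_snd, Prod.snd_zero, Finsupp.smul_single,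
      smul_eq_mul]
    simp only [show β + γ + α = α + β + γ from by abel,
      show γ + α + β = α + β + γ from by abel,
      show n + k + m = m + n + k from by ring,
      show k + m + n = m + n + k from by ring]
    rw [← Finsupp.single_add, ← Finsupp.single_add]
    refine Finsupp.single_eq_zero.mpr ?_
    unfold fval
    simp only
    set w := χ (m • β - n • α) with hw
    set u := χ (n • γ - k • β) with hu
    set v := χ (k • α - m • γ) with hv
    have h1 : χ (n • α - m • β) = w⁻¹ := by
      rw [show n • α - m • β = -(m • β - n • α) from by module, chi_neg χ hχ, hw]
    have h2 : χ ((m + n) • γ - k • (α + β)) = u * v⁻¹ := by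
      rw [show (m + n) • γ - k • (α + β) = (n • γ - k • β) + -(k • α - m • γ) from by module,
        hχ, chi_neg χ hχ, hu, hv]
    have h3 : χ (k • (α + β) - (m + n) • γ) = u⁻¹ * v := by
      rw [show k • (α + β) - (m + n) • γ = -(n • γ - k • β) + (k • α - m • γ) from by module,
        hχ, chi_neg χ hχ, hu, hv]
    have h4 : χ (k • β - n • γ) = u⁻¹ := by
      rw [show k • β - n • γ = -(n • γ - k • β) from by module, chi_neg χ hχ, hu]
    have h5 : χ ((n + k) • α - m • (β + γ)) = v * w⁻¹ := by
      rw [show (n + k) • α - m • (β + γ) = (k • α - m • γ) + -(m • β - n • α) from by module,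
        hχ, chi_neg χ hχ, hv, hw]
    have h6 : χ (m • (β + γ) - (n + k) • α) = v⁻¹ * w := by
      rw [show m • (β + γ) - (n + k) • α = -(k • α - m • γ) + (m • β - n • α) from by module,
        hχ, chi_neg χ hχ, hv, hw]
    have h7 : χ (m • γ - k • α) = v⁻¹ := by
      rw [show m • γ - k • α = -(k • α - m • γ) from by module, chi_neg χ hχ, hv]
    have h8 : χ ((k + m) • β - n • (γ + α)) = w * u⁻¹ := by
      rw [show (k + m) • β - n • (γ + α) = (m • β - n • α) + -(n • γ - k • β) from by module,
        hχ, chi_neg χ hχ, hw, hu]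
    have h9 : χ (n • (γ + α) - (k + m) • β) = w⁻¹ * u := by
      rw [show n • (γ + α) - (k + m) • β = -(m • β - n • α) + (n • γ - k • β) from by module,
        hχ, chi_neg χ hχ, hw, hu]
    rw [h1, h2, h3, h4, h5, h6, h7, h8, h9]
    simp only [Units.val_mul, Units.val_inv_eq_inv_val]
    have hwz : (w : ℂ) ≠ 0 := Units.ne_zero w
    have huz : (u : ℂ) ≠ 0 := Units.ne_zero u
    have hvz : (v : ℂ) ≠ 0 := Units.ne_zero v
    field_simp
    ring

end

noncomputable def Jf {S : Type*} [AddCommGroup S] (χ : S → ℂˣ) (f g h : (S × ℤ) →₀ ℂ) :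
    TrigA S :=
  Bmap χ (Bmap χ f g).2 h + Bmap χ (Bmap χ g h).2 f + Bmap χ (Bmap χ h f).2 g

theorem Jf_cyc {S : Type*} [AddCommGroup S] (χ : S → ℂˣ) (f g h : (S × ℤ) →₀ ℂ) :
    Jf χ f g h = Jf χ g h f := by
  unfold Jf; abel

theorem Jf_zero1 {S : Type*} [AddCommGroup S] (χ : S → ℂˣ) (g h : (S × ℤ) →₀ ℂ) :
    Jf χ 0 g h = 0 := by
  unfold Jf; simp

theorem Jf_add1 {S : Type*} [AddCommGroup S] (χ : S → ℂˣ) (a b g h : (S × ℤ) →₀ ℂ) :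
    Jf χ (a + b) g h = Jf χ a g h + Jf χ b g h := by
  unfold Jf
  simp only [map_add, LinearMap.add_apply, Prod.snd_add]
  abel

theorem Jf_single {S : Type*} [AddCommGroup S] (χ : S → ℂˣ)
    (hχ : ∀ a b : S, χ (a + b) = χ a * χ b) (p q r : S × ℤ) (a b c : ℂ) :
    Jf χ (Finsupp.single p a) (Finsupp.single q b) (Finsupp.single r c) = 0 := by
  unfold Jf
  rw [Bmap_snd_single, Bmap_snd_single, Bmap_snd_single, Bmap_single, Bmap_single, Bmap_single]
  calc (a * b * fval χ p q * c) • AbrkBasis χ (p.1 + q.1, p.2 + q.2) r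
        + (b * c * fval χ q r * a) • AbrkBasis χ (q.1 + r.1, q.2 + r.2) p
        + (c * a * fval χ r p * b) • AbrkBasis χ (r.1 + p.1, r.2 + p.2) q
      = (a * b * c) • (fval χ p q • AbrkBasis χ (p.1 + q.1, p.2 + q.2) r
        + fval χ q r • AbrkBasis χ (q.1 + r.1, q.2 + r.2) p
        + fval χ r p • AbrkBasis χ (r.1 + p.1, r.2 + p.2) q) := by module
    _ = 0 := by rw [jac_basis χ hχ p q r, smul_zero]

theorem Jf_eq_zero {S : Type*} [AddCommGroup S] (χ : S → ℂˣ)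
    (hχ : ∀ a b : S, χ (a + b) = χ a * χ b) (f g h : (S × ℤ) →₀ ℂ) :
    Jf χ f g h = 0 := by
  induction f using Finsupp.induction_linear with
  | zero => exact Jf_zero1 χ g h
  | add a b ha hb => rw [Jf_add1, ha, hb, add_zero]
  | single p a =>
    rw [Jf_cyc]
    induction g using Finsupp.induction_linear with
    | zero => exact Jf_zero1 χ _ _
    | add a' b' ha hb => rw [Jf_add1, ha, hb, add_zero]
    | single q b =>
      rw [Jf_cyc]
      induction h using Finsupp.induction_linear with
      | zero => exact Jf_zero1 χ _ _
      | add a' b' ha hb => rw [Jf_add1, ha, hb, add_zero]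
      | single r c => exact Jf_single χ hχ r p q c a b

theorem stmt0 {S : Type*} [AddCommGroup S] (χ : S → ℂˣ)
    (hχ : ∀ a b : S, χ (a + b) = χ a * χ b) :
    -- the operation is bilinear
    (∀ x y z : TrigA S, Abrk χ (x + y) z = Abrk χ x z + Abrk χ y z) ∧
    (∀ (c : ℂ) (x y : TrigA S), Abrk χ (c • x) y = c • Abrk χ x y) ∧
    (∀ x y z : TrigA S, Abrk χ x (y + z) = Abrk χ x y + Abrk χ x z) ∧
    (∀ (c : ℂ) (x y : TrigA S), Abrk χ x (c • y) = c • Abrk χ x y) ∧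
    -- it is determined by the prescribed values: `c` is central and on basis elements it is
    -- given by the trigonometric formula
    (∀ x : TrigA S, Abrk χ (Acen S) x = 0 ∧ Abrk χ x (Acen S) = 0) ∧
    (∀ (α β : S) (m n : ℤ),
      Abrk χ (Agen α m) (Agen β n) =
        (((χ (m • β - n • α) : ℂˣ) : ℂ) - ((χ (n • α - m • β) : ℂˣ) : ℂ)) • Agen (α + β) (m + n)
          + (if α + β = 0 ∧ m + n = 0 then (m : ℂ) else 0) • Acen S) ∧
    -- it is alternating
    (∀ x : TrigA S, Abrk χ x x = 0) ∧
    -- and it satisfies the Jacobi identity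
    (∀ x y z : TrigA S,
      Abrk χ (Abrk χ x y) z + Abrk χ (Abrk χ y z) x + Abrk χ (Abrk χ z x) y = 0) := by
  refine ⟨?_, ?_, ?_, ?_, ?_, ?_, ?_, ?_⟩
  · intro x y z
    simp only [Abrk_eq, Prod.snd_add, map_add, LinearMap.add_apply]
  · intro c x y
    simp only [Abrk_eq, Prod.smul_snd, map_smul, LinearMap.smul_apply]
  · intro x y z
    simp only [Abrk_eq, Prod.snd_add, map_add]
  · intro c x y
    simp only [Abrk_eq, Prod.smul_snd, map_smul]
  · intro x
    constructor <;> simp [Abrk_eq, Acen]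
  · intro α β m n
    rw [Abrk_eq]
    show Bmap χ (Finsupp.single (α, m) 1) (Finsupp.single (β, n) 1) = _
    rw [Bmap_single, one_mul, one_smul]
    refine Prod.ext ?_ ?_
    · simp only [AbrkBasis, Agen, Acen, Prod.fst_add, Prod.smul_fst, smul_eq_mul, mul_zero,
        zero_add]
      split_ifs <;> simp
    · simp only [AbrkBasis, Agen, Acen, Prod.snd_add, Prod.smul_snd, Finsupp.smul_single,
        smul_eq_mul, mul_one]
      split_ifs <;> simp
  · intro x
    rw [Abrk_eq]
    have h := Bmap_anti χ x.2 x.2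
    have h2 : (2 : ℂ) • Bmap χ x.2 x.2 = 0 := by
      rw [two_smul ℂ (Bmap χ x.2 x.2)]
      nth_rewrite 2 [h]
      rw [add_neg_cancel]
    rcases (smul_eq_zero (R := ℂ) (M := TrigA S)).mp h2 with h3 | h3
    · exact absurd h3 two_ne_zero
    · exact h3
  · intro x y z
    simp only [Abrk_eq]
    exact Jf_eq_zero χ hχ x.2 y.2 z.2
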